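/- For all real numbers a, b with 0 < a and 0 < b, and a, b < √7, |b·sinh a − a·sinh b| ≥ |a − b| · √((a·cosh a − sinh a)·(b·cosh b − sinh b)). -/

import Mathlib

open Real Set

/-- helper: monotone-from-derivative nonnegativity on [0,3] -/
lemma vdc_aux_Icc {F F' : ℝ → ℝ} (hd : ∀ x, HasDerivAt F (F' x) x) (h0 : F 0 = 0)
    (hF' : ∀ x, 0 ≤ x → x ≤ 3 → 0 ≤ F' x) :
    ∀ x, 0 ≤ x → x ≤ 3 → 0 ≤ F x := by
  intro x hx0 hx3
  have hmono : MonotoneOn F (Set.Icc (0:ℝ) 3) := by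
    apply monotoneOn_of_hasDerivWithinAt_nonneg (convex_Icc 0 3)
      (fun y _ => (hd y).continuousAt.continuousWithinAt)
      (fun y hy => (hd y).hasDerivWithinAt)
    intro y hy
    rw [interior_Icc] at hy
    exact hF' y hy.1.le hy.2.le
  have := hmono (Set.mem_Icc.2 ⟨le_rfl, by norm_num⟩) (Set.mem_Icc.2 ⟨hx0, hx3⟩) hx0
  rw [h0] at this
  exact this

lemma vdc_aux_Ici {F F' : ℝ → ℝ} (hd : ∀ x, HasDerivAt F (F' x) x) (h0 : F 0 = 0)
    (hF' : ∀ x, 0 ≤ x → 0 ≤ F' x) :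
    ∀ x, 0 ≤ x → 0 ≤ F x := by
  intro x hx0
  have hmono : MonotoneOn F (Set.Ici (0:ℝ)) := by
    apply monotoneOn_of_hasDerivWithinAt_nonneg (convex_Ici 0)
      (fun y _ => (hd y).continuousAt.continuousWithinAt)
      (fun y hy => (hd y).hasDerivWithinAt)
    intro y hy
    rw [interior_Ici] at hy
    exact hF' y hy.le
  have := hmono Set.self_mem_Ici (Set.mem_Ici.2 hx0) hx0
  rw [h0] at this
  exact this
open Real Set

lemma vdc_cosh_le_21 : ∀ x : ℝ, 0 ≤ x → x ≤ 3 → Real.cosh x ≤ 21 := by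
  intro x hx0 hx3
  have he1 : Real.exp 1 < 2.7182818286 := Real.exp_one_lt_d9
  have he3 : Real.exp 3 < 21 := by
    have : Real.exp 3 = Real.exp 1 * Real.exp 1 * Real.exp 1 := by
      rw [← Real.exp_add, ← Real.exp_add]; norm_num
    nlinarith [Real.exp_pos 1]
  have h1 : Real.exp x ≤ Real.exp 3 := Real.exp_le_exp.mpr hx3
  have h2 : Real.exp (-x) ≤ 1 := by
    rw [Real.exp_le_one_iff]; linarith
  rw [Real.cosh_eq]
  linarith

example (y : ℝ) : HasDerivAt (fun x : ℝ => 21*x - Real.sinh x) (21 - Real.cosh y) y := by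
  have h := ((hasDerivAt_id y).const_mul (21:ℝ)).sub (Real.hasDerivAt_sinh y)
  exact h.congr_deriv (by ring)
lemma vdc_sinh_ub1 : ∀ x : ℝ, 0 ≤ x → x ≤ 3 → (Real.sinh x ≤ (21/1)*x^1) := by
  intro x hx0 hx3
  have key := vdc_aux_Icc (F := fun x : ℝ => ((21/1)*x^1) - Real.sinh x)
    (F' := fun x : ℝ => ((1*(21/1))*x^0) - Real.cosh x) ?hd ?h0 ?hF' x hx0 hx3
  · linarith
  case hd =>
    intro y
    have h := (((hasDerivAt_pow 1 y).const_mul ((21/1:ℝ)))).sub (Real.hasDerivAt_sinh y)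
    exact h.congr_deriv (by push_cast; ring)
  case h0 => norm_num
  case hF' =>
    intro y hy0 hy3
    have hprev := vdc_cosh_le_21 y hy0 hy3
    nlinarith [pow_nonneg hy0 2, pow_nonneg hy0 3, pow_nonneg hy0 4, pow_nonneg hy0 5, pow_nonneg hy0 6, pow_nonneg hy0 7, pow_nonneg hy0 8, pow_nonneg hy0 9, pow_nonneg hy0 10]

lemma vdc_cosh_ub2 : ∀ x : ℝ, 0 ≤ x → x ≤ 3 → (Real.cosh x ≤ (1) + (21/2)*x^2) := by
  intro x hx0 hx3
  have key := vdc_aux_Icc (F := fun x : ℝ => ((1) + (21/2)*x^2) - Real.cosh x)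
    (F' := fun x : ℝ => ((2*(21/2))*x^1) - Real.sinh x) ?hd ?h0 ?hF' x hx0 hx3
  · linarith
  case hd =>
    intro y
    have h := (((hasDerivAt_const y ((1:ℝ))).add ((hasDerivAt_pow 2 y).const_mul ((21/2:ℝ))))).sub (Real.hasDerivAt_cosh y)
    exact h.congr_deriv (by push_cast; ring)
  case h0 => norm_num
  case hF' =>
    intro y hy0 hy3
    have hprev := vdc_sinh_ub1 y hy0 hy3
    nlinarith [pow_nonneg hy0 2, pow_nonneg hy0 3, pow_nonneg hy0 4, pow_nonneg hy0 5, pow_nonneg hy0 6, pow_nonneg hy0 7, pow_nonneg hy0 8, pow_nonneg hy0 9, pow_nonneg hy0 10]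

lemma vdc_sinh_ub3 : ∀ x : ℝ, 0 ≤ x → x ≤ 3 → (Real.sinh x ≤ (1/1)*x^1 + (21/6)*x^3) := by
  intro x hx0 hx3
  have key := vdc_aux_Icc (F := fun x : ℝ => ((1/1)*x^1 + (21/6)*x^3) - Real.sinh x)
    (F' := fun x : ℝ => ((1*(1/1))*x^0 + (3*(21/6))*x^2) - Real.cosh x) ?hd ?h0 ?hF' x hx0 hx3
  · linarith
  case hd =>
    intro y
    have h := ((((hasDerivAt_pow 1 y).const_mul ((1/1:ℝ))).add ((hasDerivAt_pow 3 y).const_mul ((21/6:ℝ))))).sub (Real.hasDerivAt_sinh y)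
    exact h.congr_deriv (by push_cast; ring)
  case h0 => norm_num
  case hF' =>
    intro y hy0 hy3
    have hprev := vdc_cosh_ub2 y hy0 hy3
    nlinarith [pow_nonneg hy0 2, pow_nonneg hy0 3, pow_nonneg hy0 4, pow_nonneg hy0 5, pow_nonneg hy0 6, pow_nonneg hy0 7, pow_nonneg hy0 8, pow_nonneg hy0 9, pow_nonneg hy0 10]

lemma vdc_cosh_ub4 : ∀ x : ℝ, 0 ≤ x → x ≤ 3 → (Real.cosh x ≤ (1) + (1/2)*x^2 + (21/24)*x^4) := by
  intro x hx0 hx3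
  have key := vdc_aux_Icc (F := fun x : ℝ => ((1) + (1/2)*x^2 + (21/24)*x^4) - Real.cosh x)
    (F' := fun x : ℝ => ((2*(1/2))*x^1 + (4*(21/24))*x^3) - Real.sinh x) ?hd ?h0 ?hF' x hx0 hx3
  · linarith
  case hd =>
    intro y
    have h := ((((hasDerivAt_const y ((1:ℝ))).add ((hasDerivAt_pow 2 y).const_mul ((1/2:ℝ)))).add ((hasDerivAt_pow 4 y).const_mul ((21/24:ℝ))))).sub (Real.hasDerivAt_cosh y)
    exact h.congr_deriv (by push_cast; ring)
  case h0 => norm_num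
  case hF' =>
    intro y hy0 hy3
    have hprev := vdc_sinh_ub3 y hy0 hy3
    nlinarith [pow_nonneg hy0 2, pow_nonneg hy0 3, pow_nonneg hy0 4, pow_nonneg hy0 5, pow_nonneg hy0 6, pow_nonneg hy0 7, pow_nonneg hy0 8, pow_nonneg hy0 9, pow_nonneg hy0 10]

lemma vdc_sinh_ub5 : ∀ x : ℝ, 0 ≤ x → x ≤ 3 → (Real.sinh x ≤ (1/1)*x^1 + (1/6)*x^3 + (21/120)*x^5) := by
  intro x hx0 hx3
  have key := vdc_aux_Icc (F := fun x : ℝ => ((1/1)*x^1 + (1/6)*x^3 + (21/120)*x^5) - Real.sinh x)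
    (F' := fun x : ℝ => ((1*(1/1))*x^0 + (3*(1/6))*x^2 + (5*(21/120))*x^4) - Real.cosh x) ?hd ?h0 ?hF' x hx0 hx3
  · linarith
  case hd =>
    intro y
    have h := (((((hasDerivAt_pow 1 y).const_mul ((1/1:ℝ))).add ((hasDerivAt_pow 3 y).const_mul ((1/6:ℝ)))).add ((hasDerivAt_pow 5 y).const_mul ((21/120:ℝ))))).sub (Real.hasDerivAt_sinh y)
    exact h.congr_deriv (by push_cast; ring)
  case h0 => norm_num
  case hF' =>
    intro y hy0 hy3
    have hprev := vdc_cosh_ub4 y hy0 hy3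
    nlinarith [pow_nonneg hy0 2, pow_nonneg hy0 3, pow_nonneg hy0 4, pow_nonneg hy0 5, pow_nonneg hy0 6, pow_nonneg hy0 7, pow_nonneg hy0 8, pow_nonneg hy0 9, pow_nonneg hy0 10]

lemma vdc_cosh_ub6 : ∀ x : ℝ, 0 ≤ x → x ≤ 3 → (Real.cosh x ≤ (1) + (1/2)*x^2 + (1/24)*x^4 + (21/720)*x^6) := by
  intro x hx0 hx3
  have key := vdc_aux_Icc (F := fun x : ℝ => ((1) + (1/2)*x^2 + (1/24)*x^4 + (21/720)*x^6) - Real.cosh x)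
    (F' := fun x : ℝ => ((2*(1/2))*x^1 + (4*(1/24))*x^3 + (6*(21/720))*x^5) - Real.sinh x) ?hd ?h0 ?hF' x hx0 hx3
  · linarith
  case hd =>
    intro y
    have h := (((((hasDerivAt_const y ((1:ℝ))).add ((hasDerivAt_pow 2 y).const_mul ((1/2:ℝ)))).add ((hasDerivAt_pow 4 y).const_mul ((1/24:ℝ)))).add ((hasDerivAt_pow 6 y).const_mul ((21/720:ℝ))))).sub (Real.hasDerivAt_cosh y)
    exact h.congr_deriv (by push_cast; ring)
  case h0 => norm_num
  case hF' =>
    intro y hy0 hy3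
    have hprev := vdc_sinh_ub5 y hy0 hy3
    nlinarith [pow_nonneg hy0 2, pow_nonneg hy0 3, pow_nonneg hy0 4, pow_nonneg hy0 5, pow_nonneg hy0 6, pow_nonneg hy0 7, pow_nonneg hy0 8, pow_nonneg hy0 9, pow_nonneg hy0 10]

lemma vdc_sinh_ub7 : ∀ x : ℝ, 0 ≤ x → x ≤ 3 → (Real.sinh x ≤ (1/1)*x^1 + (1/6)*x^3 + (1/120)*x^5 + (21/5040)*x^7) := by
  intro x hx0 hx3
  have key := vdc_aux_Icc (F := fun x : ℝ => ((1/1)*x^1 + (1/6)*x^3 + (1/120)*x^5 + (21/5040)*x^7) - Real.sinh x)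
    (F' := fun x : ℝ => ((1*(1/1))*x^0 + (3*(1/6))*x^2 + (5*(1/120))*x^4 + (7*(21/5040))*x^6) - Real.cosh x) ?hd ?h0 ?hF' x hx0 hx3
  · linarith
  case hd =>
    intro y
    have h := ((((((hasDerivAt_pow 1 y).const_mul ((1/1:ℝ))).add ((hasDerivAt_pow 3 y).const_mul ((1/6:ℝ)))).add ((hasDerivAt_pow 5 y).const_mul ((1/120:ℝ)))).add ((hasDerivAt_pow 7 y).const_mul ((21/5040:ℝ))))).sub (Real.hasDerivAt_sinh y)
    exact h.congr_deriv (by push_cast; ring)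
  case h0 => norm_num
  case hF' =>
    intro y hy0 hy3
    have hprev := vdc_cosh_ub6 y hy0 hy3
    nlinarith [pow_nonneg hy0 2, pow_nonneg hy0 3, pow_nonneg hy0 4, pow_nonneg hy0 5, pow_nonneg hy0 6, pow_nonneg hy0 7, pow_nonneg hy0 8, pow_nonneg hy0 9, pow_nonneg hy0 10]

lemma vdc_cosh_ub8 : ∀ x : ℝ, 0 ≤ x → x ≤ 3 → (Real.cosh x ≤ (1) + (1/2)*x^2 + (1/24)*x^4 + (1/720)*x^6 + (21/40320)*x^8) := by
  intro x hx0 hx3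
  have key := vdc_aux_Icc (F := fun x : ℝ => ((1) + (1/2)*x^2 + (1/24)*x^4 + (1/720)*x^6 + (21/40320)*x^8) - Real.cosh x)
    (F' := fun x : ℝ => ((2*(1/2))*x^1 + (4*(1/24))*x^3 + (6*(1/720))*x^5 + (8*(21/40320))*x^7) - Real.sinh x) ?hd ?h0 ?hF' x hx0 hx3
  · linarith
  case hd =>
    intro y
    have h := ((((((hasDerivAt_const y ((1:ℝ))).add ((hasDerivAt_pow 2 y).const_mul ((1/2:ℝ)))).add ((hasDerivAt_pow 4 y).const_mul ((1/24:ℝ)))).add ((hasDerivAt_pow 6 y).const_mul ((1/720:ℝ)))).add ((hasDerivAt_pow 8 y).const_mul ((21/40320:ℝ))))).sub (Real.hasDerivAt_cosh y)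
    exact h.congr_deriv (by push_cast; ring)
  case h0 => norm_num
  case hF' =>
    intro y hy0 hy3
    have hprev := vdc_sinh_ub7 y hy0 hy3
    nlinarith [pow_nonneg hy0 2, pow_nonneg hy0 3, pow_nonneg hy0 4, pow_nonneg hy0 5, pow_nonneg hy0 6, pow_nonneg hy0 7, pow_nonneg hy0 8, pow_nonneg hy0 9, pow_nonneg hy0 10]

lemma vdc_sinh_ub9 : ∀ x : ℝ, 0 ≤ x → x ≤ 3 → (Real.sinh x ≤ (1/1)*x^1 + (1/6)*x^3 + (1/120)*x^5 + (1/5040)*x^7 + (21/362880)*x^9) := by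
  intro x hx0 hx3
  have key := vdc_aux_Icc (F := fun x : ℝ => ((1/1)*x^1 + (1/6)*x^3 + (1/120)*x^5 + (1/5040)*x^7 + (21/362880)*x^9) - Real.sinh x)
    (F' := fun x : ℝ => ((1*(1/1))*x^0 + (3*(1/6))*x^2 + (5*(1/120))*x^4 + (7*(1/5040))*x^6 + (9*(21/362880))*x^8) - Real.cosh x) ?hd ?h0 ?hF' x hx0 hx3
  · linarith
  case hd =>
    intro y
    have h := (((((((hasDerivAt_pow 1 y).const_mul ((1/1:ℝ))).add ((hasDerivAt_pow 3 y).const_mul ((1/6:ℝ)))).add ((hasDerivAt_pow 5 y).const_mul ((1/120:ℝ)))).add ((hasDerivAt_pow 7 y).const_mul ((1/5040:ℝ)))).add ((hasDerivAt_pow 9 y).const_mul ((21/362880:ℝ))))).sub (Real.hasDerivAt_sinh y)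
    exact h.congr_deriv (by push_cast; ring)
  case h0 => norm_num
  case hF' =>
    intro y hy0 hy3
    have hprev := vdc_cosh_ub8 y hy0 hy3
    nlinarith [pow_nonneg hy0 2, pow_nonneg hy0 3, pow_nonneg hy0 4, pow_nonneg hy0 5, pow_nonneg hy0 6, pow_nonneg hy0 7, pow_nonneg hy0 8, pow_nonneg hy0 9, pow_nonneg hy0 10]

lemma vdc_cosh_ub10 : ∀ x : ℝ, 0 ≤ x → x ≤ 3 → (Real.cosh x ≤ (1) + (1/2)*x^2 + (1/24)*x^4 + (1/720)*x^6 + (1/40320)*x^8 + (21/3628800)*x^10) := by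
  intro x hx0 hx3
  have key := vdc_aux_Icc (F := fun x : ℝ => ((1) + (1/2)*x^2 + (1/24)*x^4 + (1/720)*x^6 + (1/40320)*x^8 + (21/3628800)*x^10) - Real.cosh x)
    (F' := fun x : ℝ => ((2*(1/2))*x^1 + (4*(1/24))*x^3 + (6*(1/720))*x^5 + (8*(1/40320))*x^7 + (10*(21/3628800))*x^9) - Real.sinh x) ?hd ?h0 ?hF' x hx0 hx3
  · linarith
  case hd =>
    intro y
    have h := (((((((hasDerivAt_const y ((1:ℝ))).add ((hasDerivAt_pow 2 y).const_mul ((1/2:ℝ)))).add ((hasDerivAt_pow 4 y).const_mul ((1/24:ℝ)))).add ((hasDerivAt_pow 6 y).const_mul ((1/720:ℝ)))).add ((hasDerivAt_pow 8 y).const_mul ((1/40320:ℝ)))).add ((hasDerivAt_pow 10 y).const_mul ((21/3628800:ℝ))))).sub (Real.hasDerivAt_cosh y)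
    exact h.congr_deriv (by push_cast; ring)
  case h0 => norm_num
  case hF' =>
    intro y hy0 hy3
    have hprev := vdc_sinh_ub9 y hy0 hy3
    nlinarith [pow_nonneg hy0 2, pow_nonneg hy0 3, pow_nonneg hy0 4, pow_nonneg hy0 5, pow_nonneg hy0 6, pow_nonneg hy0 7, pow_nonneg hy0 8, pow_nonneg hy0 9, pow_nonneg hy0 10]

lemma vdc_sinh_ub11 : ∀ x : ℝ, 0 ≤ x → x ≤ 3 → (Real.sinh x ≤ (1/1)*x^1 + (1/6)*x^3 + (1/120)*x^5 + (1/5040)*x^7 + (1/362880)*x^9 + (21/39916800)*x^11) := by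
  intro x hx0 hx3
  have key := vdc_aux_Icc (F := fun x : ℝ => ((1/1)*x^1 + (1/6)*x^3 + (1/120)*x^5 + (1/5040)*x^7 + (1/362880)*x^9 + (21/39916800)*x^11) - Real.sinh x)
    (F' := fun x : ℝ => ((1*(1/1))*x^0 + (3*(1/6))*x^2 + (5*(1/120))*x^4 + (7*(1/5040))*x^6 + (9*(1/362880))*x^8 + (11*(21/39916800))*x^10) - Real.cosh x) ?hd ?h0 ?hF' x hx0 hx3
  · linarith
  case hd =>
    intro y
    have h := ((((((((hasDerivAt_pow 1 y).const_mul ((1/1:ℝ))).add ((hasDerivAt_pow 3 y).const_mul ((1/6:ℝ)))).add ((hasDerivAt_pow 5 y).const_mul ((1/120:ℝ)))).add ((hasDerivAt_pow 7 y).const_mul ((1/5040:ℝ)))).add ((hasDerivAt_pow 9 y).const_mul ((1/362880:ℝ)))).add ((hasDerivAt_pow 11 y).const_mul ((21/39916800:ℝ))))).sub (Real.hasDerivAt_sinh y)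
    exact h.congr_deriv (by push_cast; ring)
  case h0 => norm_num
  case hF' =>
    intro y hy0 hy3
    have hprev := vdc_cosh_ub10 y hy0 hy3
    nlinarith [pow_nonneg hy0 2, pow_nonneg hy0 3, pow_nonneg hy0 4, pow_nonneg hy0 5, pow_nonneg hy0 6, pow_nonneg hy0 7, pow_nonneg hy0 8, pow_nonneg hy0 9, pow_nonneg hy0 10]

lemma vdc_sinh_lb1 : ∀ x : ℝ, 0 ≤ x → ((1/1)*x^1 ≤ Real.sinh x) := by
  intro x hx0
  have key := vdc_aux_Ici (F := fun x : ℝ => Real.sinh x - ((1/1)*x^1))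
    (F' := fun x : ℝ => Real.cosh x - ((1*(1/1))*x^0)) ?hd ?h0 ?hF' x hx0
  · linarith
  case hd =>
    intro y
    have h := (Real.hasDerivAt_sinh y).sub ((hasDerivAt_pow 1 y).const_mul ((1/1:ℝ)))
    exact h.congr_deriv (by push_cast; ring)
  case h0 => norm_num
  case hF' =>
    intro y hy0
    nlinarith [Real.one_le_cosh y]

lemma vdc_cosh_lb2 : ∀ x : ℝ, 0 ≤ x → ((1) + (1/2)*x^2 ≤ Real.cosh x) := by
  intro x hx0
  have key := vdc_aux_Ici (F := fun x : ℝ => Real.cosh x - ((1) + (1/2)*x^2))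
    (F' := fun x : ℝ => Real.sinh x - ((2*(1/2))*x^1)) ?hd ?h0 ?hF' x hx0
  · linarith
  case hd =>
    intro y
    have h := (Real.hasDerivAt_cosh y).sub ((hasDerivAt_const y ((1:ℝ))).add ((hasDerivAt_pow 2 y).const_mul ((1/2:ℝ))))
    exact h.congr_deriv (by push_cast; ring)
  case h0 => norm_num
  case hF' =>
    intro y hy0
    have hprev := vdc_sinh_lb1 y hy0
    nlinarith [pow_nonneg hy0 2, pow_nonneg hy0 3, pow_nonneg hy0 4, pow_nonneg hy0 5, pow_nonneg hy0 6, pow_nonneg hy0 7, pow_nonneg hy0 8, pow_nonneg hy0 9, pow_nonneg hy0 10]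

lemma vdc_sinh_lb3 : ∀ x : ℝ, 0 ≤ x → ((1/1)*x^1 + (1/6)*x^3 ≤ Real.sinh x) := by
  intro x hx0
  have key := vdc_aux_Ici (F := fun x : ℝ => Real.sinh x - ((1/1)*x^1 + (1/6)*x^3))
    (F' := fun x : ℝ => Real.cosh x - ((1*(1/1))*x^0 + (3*(1/6))*x^2)) ?hd ?h0 ?hF' x hx0
  · linarith
  case hd =>
    intro y
    have h := (Real.hasDerivAt_sinh y).sub (((hasDerivAt_pow 1 y).const_mul ((1/1:ℝ))).add ((hasDerivAt_pow 3 y).const_mul ((1/6:ℝ))))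
    exact h.congr_deriv (by push_cast; ring)
  case h0 => norm_num
  case hF' =>
    intro y hy0
    have hprev := vdc_cosh_lb2 y hy0
    nlinarith [pow_nonneg hy0 2, pow_nonneg hy0 3, pow_nonneg hy0 4, pow_nonneg hy0 5, pow_nonneg hy0 6, pow_nonneg hy0 7, pow_nonneg hy0 8, pow_nonneg hy0 9, pow_nonneg hy0 10]

lemma vdc_cosh_lb4 : ∀ x : ℝ, 0 ≤ x → ((1) + (1/2)*x^2 + (1/24)*x^4 ≤ Real.cosh x) := by
  intro x hx0
  have key := vdc_aux_Ici (F := fun x : ℝ => Real.cosh x - ((1) + (1/2)*x^2 + (1/24)*x^4))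
    (F' := fun x : ℝ => Real.sinh x - ((2*(1/2))*x^1 + (4*(1/24))*x^3)) ?hd ?h0 ?hF' x hx0
  · linarith
  case hd =>
    intro y
    have h := (Real.hasDerivAt_cosh y).sub (((hasDerivAt_const y ((1:ℝ))).add ((hasDerivAt_pow 2 y).const_mul ((1/2:ℝ)))).add ((hasDerivAt_pow 4 y).const_mul ((1/24:ℝ))))
    exact h.congr_deriv (by push_cast; ring)
  case h0 => norm_num
  case hF' =>
    intro y hy0
    have hprev := vdc_sinh_lb3 y hy0
    nlinarith [pow_nonneg hy0 2, pow_nonneg hy0 3, pow_nonneg hy0 4, pow_nonneg hy0 5, pow_nonneg hy0 6, pow_nonneg hy0 7, pow_nonneg hy0 8, pow_nonneg hy0 9, pow_nonneg hy0 10]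

lemma vdc_sinh_lb5 : ∀ x : ℝ, 0 ≤ x → ((1/1)*x^1 + (1/6)*x^3 + (1/120)*x^5 ≤ Real.sinh x) := by
  intro x hx0
  have key := vdc_aux_Ici (F := fun x : ℝ => Real.sinh x - ((1/1)*x^1 + (1/6)*x^3 + (1/120)*x^5))
    (F' := fun x : ℝ => Real.cosh x - ((1*(1/1))*x^0 + (3*(1/6))*x^2 + (5*(1/120))*x^4)) ?hd ?h0 ?hF' x hx0
  · linarith
  case hd =>
    intro y
    have h := (Real.hasDerivAt_sinh y).sub ((((hasDerivAt_pow 1 y).const_mul ((1/1:ℝ))).add ((hasDerivAt_pow 3 y).const_mul ((1/6:ℝ)))).add ((hasDerivAt_pow 5 y).const_mul ((1/120:ℝ))))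
    exact h.congr_deriv (by push_cast; ring)
  case h0 => norm_num
  case hF' =>
    intro y hy0
    have hprev := vdc_cosh_lb4 y hy0
    nlinarith [pow_nonneg hy0 2, pow_nonneg hy0 3, pow_nonneg hy0 4, pow_nonneg hy0 5, pow_nonneg hy0 6, pow_nonneg hy0 7, pow_nonneg hy0 8, pow_nonneg hy0 9, pow_nonneg hy0 10]

lemma vdc_cosh_lb6 : ∀ x : ℝ, 0 ≤ x → ((1) + (1/2)*x^2 + (1/24)*x^4 + (1/720)*x^6 ≤ Real.cosh x) := by
  intro x hx0
  have key := vdc_aux_Ici (F := fun x : ℝ => Real.cosh x - ((1) + (1/2)*x^2 + (1/24)*x^4 + (1/720)*x^6))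
    (F' := fun x : ℝ => Real.sinh x - ((2*(1/2))*x^1 + (4*(1/24))*x^3 + (6*(1/720))*x^5)) ?hd ?h0 ?hF' x hx0
  · linarith
  case hd =>
    intro y
    have h := (Real.hasDerivAt_cosh y).sub ((((hasDerivAt_const y ((1:ℝ))).add ((hasDerivAt_pow 2 y).const_mul ((1/2:ℝ)))).add ((hasDerivAt_pow 4 y).const_mul ((1/24:ℝ)))).add ((hasDerivAt_pow 6 y).const_mul ((1/720:ℝ))))
    exact h.congr_deriv (by push_cast; ring)
  case h0 => norm_num
  case hF' =>
    intro y hy0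
    have hprev := vdc_sinh_lb5 y hy0
    nlinarith [pow_nonneg hy0 2, pow_nonneg hy0 3, pow_nonneg hy0 4, pow_nonneg hy0 5, pow_nonneg hy0 6, pow_nonneg hy0 7, pow_nonneg hy0 8, pow_nonneg hy0 9, pow_nonneg hy0 10]

lemma vdc_sinh_lb7 : ∀ x : ℝ, 0 ≤ x → ((1/1)*x^1 + (1/6)*x^3 + (1/120)*x^5 + (1/5040)*x^7 ≤ Real.sinh x) := by
  intro x hx0
  have key := vdc_aux_Ici (F := fun x : ℝ => Real.sinh x - ((1/1)*x^1 + (1/6)*x^3 + (1/120)*x^5 + (1/5040)*x^7))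
    (F' := fun x : ℝ => Real.cosh x - ((1*(1/1))*x^0 + (3*(1/6))*x^2 + (5*(1/120))*x^4 + (7*(1/5040))*x^6)) ?hd ?h0 ?hF' x hx0
  · linarith
  case hd =>
    intro y
    have h := (Real.hasDerivAt_sinh y).sub (((((hasDerivAt_pow 1 y).const_mul ((1/1:ℝ))).add ((hasDerivAt_pow 3 y).const_mul ((1/6:ℝ)))).add ((hasDerivAt_pow 5 y).const_mul ((1/120:ℝ)))).add ((hasDerivAt_pow 7 y).const_mul ((1/5040:ℝ))))
    exact h.congr_deriv (by push_cast; ring)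
  case h0 => norm_num
  case hF' =>
    intro y hy0
    have hprev := vdc_cosh_lb6 y hy0
    nlinarith [pow_nonneg hy0 2, pow_nonneg hy0 3, pow_nonneg hy0 4, pow_nonneg hy0 5, pow_nonneg hy0 6, pow_nonneg hy0 7, pow_nonneg hy0 8, pow_nonneg hy0 9, pow_nonneg hy0 10]

lemma vdc_cosh_lb8 : ∀ x : ℝ, 0 ≤ x → ((1) + (1/2)*x^2 + (1/24)*x^4 + (1/720)*x^6 + (1/40320)*x^8 ≤ Real.cosh x) := by
  intro x hx0
  have key := vdc_aux_Ici (F := fun x : ℝ => Real.cosh x - ((1) + (1/2)*x^2 + (1/24)*x^4 + (1/720)*x^6 + (1/40320)*x^8))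
    (F' := fun x : ℝ => Real.sinh x - ((2*(1/2))*x^1 + (4*(1/24))*x^3 + (6*(1/720))*x^5 + (8*(1/40320))*x^7)) ?hd ?h0 ?hF' x hx0
  · linarith
  case hd =>
    intro y
    have h := (Real.hasDerivAt_cosh y).sub (((((hasDerivAt_const y ((1:ℝ))).add ((hasDerivAt_pow 2 y).const_mul ((1/2:ℝ)))).add ((hasDerivAt_pow 4 y).const_mul ((1/24:ℝ)))).add ((hasDerivAt_pow 6 y).const_mul ((1/720:ℝ)))).add ((hasDerivAt_pow 8 y).const_mul ((1/40320:ℝ))))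
    exact h.congr_deriv (by push_cast; ring)
  case h0 => norm_num
  case hF' =>
    intro y hy0
    have hprev := vdc_sinh_lb7 y hy0
    nlinarith [pow_nonneg hy0 2, pow_nonneg hy0 3, pow_nonneg hy0 4, pow_nonneg hy0 5, pow_nonneg hy0 6, pow_nonneg hy0 7, pow_nonneg hy0 8, pow_nonneg hy0 9, pow_nonneg hy0 10]

lemma vdc_sinh_lb9 : ∀ x : ℝ, 0 ≤ x → ((1/1)*x^1 + (1/6)*x^3 + (1/120)*x^5 + (1/5040)*x^7 + (1/362880)*x^9 ≤ Real.sinh x) := by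
  intro x hx0
  have key := vdc_aux_Ici (F := fun x : ℝ => Real.sinh x - ((1/1)*x^1 + (1/6)*x^3 + (1/120)*x^5 + (1/5040)*x^7 + (1/362880)*x^9))
    (F' := fun x : ℝ => Real.cosh x - ((1*(1/1))*x^0 + (3*(1/6))*x^2 + (5*(1/120))*x^4 + (7*(1/5040))*x^6 + (9*(1/362880))*x^8)) ?hd ?h0 ?hF' x hx0
  · linarith
  case hd =>
    intro y
    have h := (Real.hasDerivAt_sinh y).sub ((((((hasDerivAt_pow 1 y).const_mul ((1/1:ℝ))).add ((hasDerivAt_pow 3 y).const_mul ((1/6:ℝ)))).add ((hasDerivAt_pow 5 y).const_mul ((1/120:ℝ)))).add ((hasDerivAt_pow 7 y).const_mul ((1/5040:ℝ)))).add ((hasDerivAt_pow 9 y).const_mul ((1/362880:ℝ))))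
    exact h.congr_deriv (by push_cast; ring)
  case h0 => norm_num
  case hF' =>
    intro y hy0
    have hprev := vdc_cosh_lb8 y hy0
    nlinarith [pow_nonneg hy0 2, pow_nonneg hy0 3, pow_nonneg hy0 4, pow_nonneg hy0 5, pow_nonneg hy0 6, pow_nonneg hy0 7, pow_nonneg hy0 8, pow_nonneg hy0 9, pow_nonneg hy0 10]

lemma vdc_cosh_lb10 : ∀ x : ℝ, 0 ≤ x → ((1) + (1/2)*x^2 + (1/24)*x^4 + (1/720)*x^6 + (1/40320)*x^8 + (1/3628800)*x^10 ≤ Real.cosh x) := by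
  intro x hx0
  have key := vdc_aux_Ici (F := fun x : ℝ => Real.cosh x - ((1) + (1/2)*x^2 + (1/24)*x^4 + (1/720)*x^6 + (1/40320)*x^8 + (1/3628800)*x^10))
    (F' := fun x : ℝ => Real.sinh x - ((2*(1/2))*x^1 + (4*(1/24))*x^3 + (6*(1/720))*x^5 + (8*(1/40320))*x^7 + (10*(1/3628800))*x^9)) ?hd ?h0 ?hF' x hx0
  · linarith
  case hd =>
    intro y
    have h := (Real.hasDerivAt_cosh y).sub ((((((hasDerivAt_const y ((1:ℝ))).add ((hasDerivAt_pow 2 y).const_mul ((1/2:ℝ)))).add ((hasDerivAt_pow 4 y).const_mul ((1/24:ℝ)))).add ((hasDerivAt_pow 6 y).const_mul ((1/720:ℝ)))).add ((hasDerivAt_pow 8 y).const_mul ((1/40320:ℝ)))).add ((hasDerivAt_pow 10 y).const_mul ((1/3628800:ℝ))))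
    exact h.congr_deriv (by push_cast; ring)
  case h0 => norm_num
  case hF' =>
    intro y hy0
    have hprev := vdc_sinh_lb9 y hy0
    nlinarith [pow_nonneg hy0 2, pow_nonneg hy0 3, pow_nonneg hy0 4, pow_nonneg hy0 5, pow_nonneg hy0 6, pow_nonneg hy0 7, pow_nonneg hy0 8, pow_nonneg hy0 9, pow_nonneg hy0 10]

set_option maxHeartbeats 1000000 in
lemma vdc_G_nonneg : ∀ x : ℝ, 0 ≤ x → x^2 ≤ 7 →
    0 ≤ (1/9)*x^6 - (1/1575)*x^10 - (1471/29937600)*x^12 - (541/167650560)*x^14 - (1/4233600)*x^16 - (461/47029248000)*x^18 - (529/2414168064000)*x^20 - (131/37936926720000)*x^22 - (1/3613040640000)*x^24 := by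
  intro x hx0 hx7
  have hx2 : (0:ℝ) ≤ x^2 := by positivity
  have hx6 : (0:ℝ) ≤ x^6 := by positivity
  have hp : ∀ n : ℕ, (x^2)^n ≤ 7^n := fun n => pow_le_pow_left₀ hx2 hx7 n
  have q2 := mul_le_mul_of_nonneg_left (hp 2) hx6
  have q3 := mul_le_mul_of_nonneg_left (hp 3) hx6
  have q4 := mul_le_mul_of_nonneg_left (hp 4) hx6
  have q5 := mul_le_mul_of_nonneg_left (hp 5) hx6
  have q6 := mul_le_mul_of_nonneg_left (hp 6) hx6
  have q7 := mul_le_mul_of_nonneg_left (hp 7) hx6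
  have q8 := mul_le_mul_of_nonneg_left (hp 8) hx6
  have q9 := mul_le_mul_of_nonneg_left (hp 9) hx6
  nlinarith [q2, q3, q4, q5, q6, q7, q8, q9, hx6]

set_option maxHeartbeats 2000000 in
lemma vdc_phi_nonneg : ∀ x : ℝ, 0 ≤ x → x^2 ≤ 7 →
    0 ≤ x^2*((Real.sinh x)^2 - x^2) - 2*(x*Real.cosh x - Real.sinh x)^2 := by
  intro x hx0 hx7
  have hx3 : x ≤ 3 := by nlinarith
  have hsl := vdc_sinh_lb9 x hx0
  have hcl := vdc_cosh_lb10 x hx0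
  have hsu := vdc_sinh_ub11 x hx0 hx3
  have hC2 : (Real.cosh x)^2 = (Real.sinh x)^2 + 1 := Real.cosh_sq x
  have hS0 : 0 ≤ Real.sinh x := le_trans (by positivity) hsl
  have hC0 : 0 ≤ Real.cosh x := le_trans (by positivity) hcl
  have h1 : (Real.sinh x)^2 ≤ ((1/1)*x^1 + (1/6)*x^3 + (1/120)*x^5 + (1/5040)*x^7 + (1/362880)*x^9 + (21/39916800)*x^11)^2 := pow_le_pow_left₀ hS0 hsu 2
  have h2 : ((1/1)*x^1 + (1/6)*x^3 + (1/120)*x^5 + (1/5040)*x^7 + (1/362880)*x^9) * ((1) + (1/2)*x^2 + (1/24)*x^4 + (1/720)*x^6 + (1/40320)*x^8 + (1/3628800)*x^10) ≤ Real.sinh x * Real.cosh x :=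
    mul_le_mul hsl hcl (by positivity) hS0
  have hG := vdc_G_nonneg x hx0 hx7
  have ht1 : 0 ≤ (x^2+2)*(((1/1)*x^1 + (1/6)*x^3 + (1/120)*x^5 + (1/5040)*x^7 + (1/362880)*x^9 + (21/39916800)*x^11)^2 - (Real.sinh x)^2) :=
    mul_nonneg (by positivity) (by linarith)
  have ht2 : 0 ≤ 4*x*(Real.sinh x * Real.cosh x - ((1/1)*x^1 + (1/6)*x^3 + (1/120)*x^5 + (1/5040)*x^7 + (1/362880)*x^9) * ((1) + (1/2)*x^2 + (1/24)*x^4 + (1/720)*x^6 + (1/40320)*x^8 + (1/3628800)*x^10)) :=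
    mul_nonneg (by positivity) (by linarith)
  have hz2 : -(2*x^2*((Real.cosh x)^2 - ((Real.sinh x)^2+1))) = 0 := by rw [hC2]; ring
  have idt : x^2*((Real.sinh x)^2 - x^2) - 2*(x*Real.cosh x - Real.sinh x)^2
      = ((1/9)*x^6 - (1/1575)*x^10 - (1471/29937600)*x^12 - (541/167650560)*x^14 - (1/4233600)*x^16 - (461/47029248000)*x^18 - (529/2414168064000)*x^20 - (131/37936926720000)*x^22 - (1/3613040640000)*x^24) + (x^2+2)*(((1/1)*x^1 + (1/6)*x^3 + (1/120)*x^5 + (1/5040)*x^7 + (1/362880)*x^9 + (21/39916800)*x^11)^2 - (Real.sinh x)^2)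
        + 4*x*(Real.sinh x * Real.cosh x - ((1/1)*x^1 + (1/6)*x^3 + (1/120)*x^5 + (1/5040)*x^7 + (1/362880)*x^9) * ((1) + (1/2)*x^2 + (1/24)*x^4 + (1/720)*x^6 + (1/40320)*x^8 + (1/3628800)*x^10))
        - (2*x^2*((Real.cosh x)^2 - ((Real.sinh x)^2+1))) := by ring
  linarith [idt, hG, ht1, ht2, hz2]


noncomputable def vdcH (x : ℝ) : ℝ := (x*Real.cosh x - Real.sinh x)/x^2
noncomputable def vdcH1 (x : ℝ) : ℝ := ((x^2+2)*Real.sinh x - 2*x*Real.cosh x)/x^3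
noncomputable def vdcH2 (x : ℝ) : ℝ := ((x^3+6*x)*Real.cosh x - (3*x^2+6)*Real.sinh x)/x^4
noncomputable def vdcF (x : ℝ) : ℝ := Real.sinh x / x

lemma vdc_N_pos {x : ℝ} (hx : 0 < x) : 0 < x*Real.cosh x - Real.sinh x := by
  have hmono : StrictMonoOn (fun y : ℝ => y*Real.cosh y - Real.sinh y) (Set.Ici 0) := by
    apply strictMonoOn_of_hasDerivWithinAt_pos (convex_Ici 0)
      (f' := fun y => y * Real.sinh y)
    · intro y _
      exact (((hasDerivAt_id y).mul (Real.hasDerivAt_cosh y)).sub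
        (Real.hasDerivAt_sinh y)).continuousAt.continuousWithinAt
    · intro y _
      have h := ((hasDerivAt_id y).mul (Real.hasDerivAt_cosh y)).sub (Real.hasDerivAt_sinh y)
      have h' : HasDerivAt (fun y : ℝ => y*Real.cosh y - Real.sinh y) (y * Real.sinh y) y := by
        exact h.congr_deriv (by simp only [id_eq]; ring)
      exact h'.hasDerivWithinAt
    · intro y hy
      rw [interior_Ici] at hy
      exact mul_pos hy (Real.sinh_pos_iff.mpr hy)
  have := hmono Set.self_mem_Ici (Set.mem_Ici.2 hx.le) hx
  simpa using this

lemma vdcH_pos {x : ℝ} (hx : 0 < x) : 0 < vdcH x :=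
  div_pos (vdc_N_pos hx) (by positivity)

lemma vdc_hasDerivAt_H {x : ℝ} (hx : x ≠ 0) : HasDerivAt vdcH (vdcH1 x) x := by
  have hnum : HasDerivAt (fun y : ℝ => y*Real.cosh y - Real.sinh y) (x * Real.sinh x) x := by
    have h := ((hasDerivAt_id x).mul (Real.hasDerivAt_cosh x)).sub (Real.hasDerivAt_sinh x)
    exact h.congr_deriv (by simp only [id_eq]; ring)
  have hden : HasDerivAt (fun y : ℝ => y^2) (2*x) x := by
    simpa using hasDerivAt_pow 2 x
  have h := hnum.div hden (pow_ne_zero 2 hx)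
  exact h.congr_deriv (by unfold vdcH1; field_simp; ring)

lemma vdc_hasDerivAt_H1 {x : ℝ} (hx : x ≠ 0) : HasDerivAt vdcH1 (vdcH2 x) x := by
  have hnum : HasDerivAt (fun y : ℝ => (y^2+2)*Real.sinh y - 2*y*Real.cosh y)
      (x^2 * Real.cosh x) x := by
    have h1 := ((hasDerivAt_pow 2 x).add_const 2).mul (Real.hasDerivAt_sinh x)
    have h2 := ((hasDerivAt_id x).const_mul 2).mul (Real.hasDerivAt_cosh x)
    have h := h1.sub h2
    exact h.congr_deriv (by simp only [id_eq]; push_cast; ring)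
  have hden : HasDerivAt (fun y : ℝ => y^3) (3*x^2) x := by
    simpa using hasDerivAt_pow 3 x
  have h := hnum.div hden (pow_ne_zero 3 hx)
  exact h.congr_deriv (by unfold vdcH2; field_simp; ring)

lemma vdc_hasDerivAt_F {x : ℝ} (hx : x ≠ 0) : HasDerivAt vdcF (vdcH x) x := by
  have h := (Real.hasDerivAt_sinh x).div (hasDerivAt_id x) hx
  exact h.congr_deriv (by unfold vdcH; simp only [id_eq]; field_simp)

lemma vdcH2_nonneg {x : ℝ} (hx : 0 ≤ x) : 0 ≤ vdcH2 x := by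
  have hg : 0 ≤ (x^3+6*x)*Real.cosh x - (3*x^2+6)*Real.sinh x := by
    refine vdc_aux_Ici (F := fun y : ℝ => (y^3+6*y)*Real.cosh y - (3*y^2+6)*Real.sinh y)
      (F' := fun y : ℝ => y^3 * Real.sinh y) ?_ ?_ ?_ x hx
    · intro y
      have h1 := (((hasDerivAt_pow 3 y).add ((hasDerivAt_id y).const_mul 6))).mul
        (Real.hasDerivAt_cosh y)
      have h2 := (((hasDerivAt_pow 2 y).const_mul 3).add_const 6).mul (Real.hasDerivAt_sinh y)
      have h := h1.sub h2
      exact h.congr_deriv (by simp only [id_eq, Pi.add_apply]; push_cast; ring)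
    · norm_num
    · intro y hy
      exact mul_nonneg (by positivity) (Real.sinh_nonneg_iff.mpr hy)
  exact div_nonneg hg (by positivity)

lemma vdc_logconc {x : ℝ} (hx : 0 < x) (hx7 : x^2 ≤ 7) :
    vdcH2 x * vdcH x ≤ vdcH1 x * vdcH1 x := by
  have hphi := vdc_phi_nonneg x hx.le hx7
  have hC2 : (Real.cosh x)^2 = (Real.sinh x)^2 + 1 := Real.cosh_sq x
  unfold vdcH vdcH1 vdcH2
  rw [div_mul_div_comm, div_mul_div_comm, div_le_div_iff₀ (by positivity) (by positivity)]
  have key : ((x^2+2)*Real.sinh x - 2*x*Real.cosh x)*((x^2+2)*Real.sinh x - 2*x*Real.cosh x)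
      - ((x^3+6*x)*Real.cosh x - (3*x^2+6)*Real.sinh x)*(x*Real.cosh x - Real.sinh x)
      = (x^2*((Real.sinh x)^2 - x^2) - 2*(x*Real.cosh x - Real.sinh x)^2)
        - x^4*((Real.cosh x)^2 - ((Real.sinh x)^2+1)) := by ring
  have hz : (Real.cosh x)^2 - ((Real.sinh x)^2+1) = 0 := by rw [hC2]; ring
  have hnum : 0 ≤ ((x^2+2)*Real.sinh x - 2*x*Real.cosh x)*((x^2+2)*Real.sinh x - 2*x*Real.cosh x)
      - ((x^3+6*x)*Real.cosh x - (3*x^2+6)*Real.sinh x)*(x*Real.cosh x - Real.sinh x) := by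
    rw [key, hz]; linarith
  have h6 : (0:ℝ) ≤ x^6 := by positivity
  nlinarith [mul_nonneg hnum h6]

lemma vdc_main {a b : ℝ} (hb : 0 < b) (hba : b < a) (ha7 : a < Real.sqrt 7) :
    (a-b) * Real.sqrt ((a*Real.cosh a - Real.sinh a)*(b*Real.cosh b - Real.sinh b))
      ≤ b*Real.sinh a - a*Real.sinh b := by
  have ha : 0 < a := hb.trans hba
  have ha2 : a^2 ≤ 7 := by
    have h7 : (Real.sqrt 7)^2 = 7 := Real.sq_sqrt (by norm_num)
    nlinarith [Real.sqrt_nonneg 7]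
  have hmem : ∀ x ∈ Set.Icc b a, 0 < x := fun x hx => lt_of_lt_of_le hb hx.1
  set m : ℝ := (a+b)/2 with hm
  have hmba : m ∈ Set.Icc b a := by constructor <;> [linarith; linarith]
  have hm0 : 0 < m := hmem m hmba
  -- convexity of vdcH on [b,a]
  have hconv : ConvexOn ℝ (Set.Icc b a) vdcH := by
    apply convexOn_of_hasDerivWithinAt2_nonneg (convex_Icc b a) (f' := vdcH1) (f'' := vdcH2)
    · exact fun x hx => (vdc_hasDerivAt_H (hmem x hx).ne').continuousAt.continuousWithinAt
    · intro x hx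
      rw [interior_Icc] at hx
      exact (vdc_hasDerivAt_H (hmem x (Set.Ioo_subset_Icc_self hx)).ne').hasDerivWithinAt
    · intro x hx
      rw [interior_Icc] at hx
      exact (vdc_hasDerivAt_H1 (hmem x (Set.Ioo_subset_Icc_self hx)).ne').hasDerivWithinAt
    · intro x hx
      rw [interior_Icc] at hx
      exact vdcH2_nonneg (hmem x (Set.Ioo_subset_Icc_self hx)).le
  -- concavity of log ∘ vdcH on [b,a]
  have hconc : ConcaveOn ℝ (Set.Icc b a) (fun x => Real.log (vdcH x)) := by
    apply concaveOn_of_hasDerivWithinAt2_nonpos (convex_Icc b a)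
      (f' := fun x => vdcH1 x / vdcH x)
      (f'' := fun x => (vdcH2 x * vdcH x - vdcH1 x * vdcH1 x)/(vdcH x)^2)
    · intro x hx
      have hx0 := hmem x hx
      exact ((vdc_hasDerivAt_H hx0.ne').log (vdcH_pos hx0).ne').continuousAt.continuousWithinAt
    · intro x hx
      rw [interior_Icc] at hx
      have hx0 := hmem x (Set.Ioo_subset_Icc_self hx)
      exact ((vdc_hasDerivAt_H hx0.ne').log (vdcH_pos hx0).ne').hasDerivWithinAt
    · intro x hx
      rw [interior_Icc] at hx
      have hx0 := hmem x (Set.Ioo_subset_Icc_self hx)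
      have h := (vdc_hasDerivAt_H1 hx0.ne').div (vdc_hasDerivAt_H hx0.ne') (vdcH_pos hx0).ne'
      exact h.hasDerivWithinAt
    · intro x hx
      rw [interior_Icc] at hx
      have hx0 := hmem x (Set.Ioo_subset_Icc_self hx)
      have hx7 : x^2 ≤ 7 := by nlinarith [hx.2, hx0]
      have := vdc_logconc hx0 hx7
      apply div_nonpos_of_nonpos_of_nonneg
      · linarith
      · positivity
  -- geometric mean bound
  have hmean : Real.sqrt (vdcH a * vdcH b) ≤ vdcH m := by
    have hmem_a : a ∈ Set.Icc b a := Set.right_mem_Icc.2 hba.le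
    have hmem_b : b ∈ Set.Icc b a := Set.left_mem_Icc.2 hba.le
    have hk := hconc.2 hmem_a hmem_b (by norm_num : (0:ℝ) ≤ 1/2) (by norm_num : (0:ℝ) ≤ 1/2)
      (by norm_num)
    simp only [smul_eq_mul] at hk
    rw [show (1/2:ℝ)*a + (1/2:ℝ)*b = m by rw [hm]; ring] at hk
    have hHa := vdcH_pos ha
    have hHb := vdcH_pos hb
    have hHm := vdcH_pos hm0
    have hlog : Real.log (vdcH a * vdcH b) ≤ Real.log ((vdcH m)^2) := by
      rw [Real.log_mul hHa.ne' hHb.ne', Real.log_pow]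
      push_cast
      linarith
    have := (Real.log_le_log_iff (by positivity) (by positivity)).mp hlog
    calc Real.sqrt (vdcH a * vdcH b) ≤ Real.sqrt ((vdcH m)^2) := Real.sqrt_le_sqrt this
    _ = vdcH m := Real.sqrt_sq hHm.le
  -- Hermite–Hadamard-type step
  have hstep : (a-b) * vdcH m ≤ vdcF a - vdcF b := by
    set A : ℝ → ℝ := fun t => vdcF t - vdcF (a+b-t) - (2*t-(a+b)) * vdcH m with hA
    have hAd : ∀ t ∈ Set.Icc m a, HasDerivAt A
        (vdcH t + vdcH (a+b-t) - 2 * vdcH m) t := by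
      intro t ht
      have ht0 : 0 < t := lt_of_lt_of_le hm0 ht.1
      have hu0 : 0 < a+b-t := by
        have h2 := ht.2
        linarith
      have h1 := vdc_hasDerivAt_F ht0.ne'
      have hinner : HasDerivAt (fun t : ℝ => a+b-t) (-1) t := by
        exact ((hasDerivAt_const t (a+b)).sub (hasDerivAt_id t)).congr_deriv (by ring)
      have h2 : HasDerivAt (fun t : ℝ => vdcF (a+b-t)) (vdcH (a+b-t) * (-1)) t :=
        (vdc_hasDerivAt_F hu0.ne').comp t hinner
      have h3 : HasDerivAt (fun t : ℝ => (2*t-(a+b)) * vdcH m) (2 * vdcH m) t := by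
        have h' := (((hasDerivAt_id t).const_mul 2).sub_const (a+b)).mul_const (vdcH m)
        simp only [id_eq] at h'
        exact h'.congr_deriv (by ring)
      have h := (h1.sub h2).sub h3
      exact h.congr_deriv (by ring)
    have hmono : MonotoneOn A (Set.Icc m a) := by
      refine monotoneOn_of_hasDerivWithinAt_nonneg (f' := fun t => vdcH t + vdcH (a+b-t) - 2 * vdcH m) (convex_Icc m a)
        (fun t ht => (hAd t ht).continuousAt.continuousWithinAt) (fun t ht => ?_) (fun t ht => ?_)
      · rw [interior_Icc] at ht
        exact (hAd t (Set.Ioo_subset_Icc_self ht)).hasDerivWithinAt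
      rw [interior_Icc] at ht
      have htm : t ∈ Set.Icc b a := by
        constructor
        · have := ht.1; rw [hm] at this; linarith
        · exact ht.2.le
      have hum : a+b-t ∈ Set.Icc b a := by
        constructor
        · linarith [ht.2]
        · have := ht.1; rw [hm] at this; linarith
      have hc := hconv.2 htm hum (by norm_num : (0:ℝ) ≤ 1/2) (by norm_num : (0:ℝ) ≤ 1/2)
        (by norm_num)
      simp only [smul_eq_mul] at hc
      rw [show (1/2:ℝ)*t + (1/2:ℝ)*(a+b-t) = m by rw [hm]; ring] at hc
      show 0 ≤ vdcH t + vdcH (a+b-t) - 2 * vdcH m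
      linarith
    have hm_mem : m ∈ Set.Icc m a := Set.left_mem_Icc.2 (by rw [hm]; linarith)
    have ha_mem : a ∈ Set.Icc m a := Set.right_mem_Icc.2 (by rw [hm]; linarith)
    have hMa := hmono hm_mem ha_mem (by rw [hm]; linarith)
    have hAm : A m = 0 := by
      simp only [hA]
      rw [show a+b-m = m by rw [hm]; ring, show 2*m-(a+b) = 0 by rw [hm]; ring]
      ring
    have hAa : A a = vdcF a - vdcF b - (a-b) * vdcH m := by
      simp only [hA]
      rw [show a+b-a = b by ring, show 2*a-(a+b) = a-b by ring]
    rw [hAm, hAa] at hMa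
    linarith
  -- assembly
  have hfa : b*Real.sinh a - a*Real.sinh b = a*b*(vdcF a - vdcF b) := by
    unfold vdcF
    field_simp
  have hNa : a*Real.cosh a - Real.sinh a = a^2 * vdcH a := by
    unfold vdcH
    field_simp
  have hNb : b*Real.cosh b - Real.sinh b = b^2 * vdcH b := by
    unfold vdcH
    field_simp
  have hprod : (a*Real.cosh a - Real.sinh a)*(b*Real.cosh b - Real.sinh b)
      = (a*b)^2 * (vdcH a * vdcH b) := by
    rw [hNa, hNb]; ring
  have hsqrt : Real.sqrt ((a*Real.cosh a - Real.sinh a)*(b*Real.cosh b - Real.sinh b))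
      = (a*b) * Real.sqrt (vdcH a * vdcH b) := by
    rw [hprod, Real.sqrt_mul (sq_nonneg (a*b)), Real.sqrt_sq (by positivity)]
  rw [hsqrt, hfa]
  have hab0 : 0 < a*b := by positivity
  have hab1 : 0 < a-b := by linarith
  calc (a-b) * ((a*b) * Real.sqrt (vdcH a * vdcH b))
      ≤ (a-b) * ((a*b) * vdcH m) := by
        apply mul_le_mul_of_nonneg_left _ hab1.le
        exact mul_le_mul_of_nonneg_left hmean hab0.le
    _ ≤ a*b*(vdcF a - vdcF b) := by
        have h := mul_le_mul_of_nonneg_left hstep hab0.le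
        calc (a-b) * ((a*b) * vdcH m) = (a*b) * ((a-b) * vdcH m) := by ring
        _ ≤ a*b*(vdcF a - vdcF b) := h

theorem vanDerCorput_sinh_half (a b : ℝ) (ha : 0 < a) (hb : 0 < b)
    (ha7 : a < Real.sqrt 7) (hb7 : b < Real.sqrt 7) :
    |b * Real.sinh a - a * Real.sinh b| ≥
      |a - b| * Real.sqrt ((a * Real.cosh a - Real.sinh a) * (b * Real.cosh b - Real.sinh b)) := by
  rcases lt_trichotomy a b with hab | hab | hab
  · have h := vdc_main ha hab hb7
    have habs : |a - b| = b - a := by rw [abs_of_neg (by linarith)]; ring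
    rw [habs]
    have hcomm : (a*Real.cosh a - Real.sinh a)*(b*Real.cosh b - Real.sinh b)
        = (b*Real.cosh b - Real.sinh b)*(a*Real.cosh a - Real.sinh a) := by ring
    rw [hcomm]
    calc (b-a) * Real.sqrt ((b*Real.cosh b - Real.sinh b)*(a*Real.cosh a - Real.sinh a))
        ≤ a*Real.sinh b - b*Real.sinh a := h
      _ = -(b*Real.sinh a - a*Real.sinh b) := by ring
      _ ≤ |b*Real.sinh a - a*Real.sinh b| := neg_le_abs _
  · subst hab
    simp
  · have h := vdc_main hb hab ha7
    have habs : |a - b| = a - b := abs_of_pos (by linarith)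
    rw [habs]
    calc (a-b) * Real.sqrt ((a*Real.cosh a - Real.sinh a)*(b*Real.cosh b - Real.sinh b))
        ≤ b*Real.sinh a - a*Real.sinh b := h
      _ ≤ |b*Real.sinh a - a*Real.sinh b| := le_abs_self _
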